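/- Let n ≥ 2, let (X,d) be a metric space with |X| ≥ n, and let T : X → X be a mapping contracting total pairwise distance on n points. Then the number of periodic points of T is at most n−1; in particular, there do not exist n pairwise distinct points x₁,...,xₙ ∈ X each of which is periodic for T. -/

import Mathlib

noncomputable def totalS {X : Type*} [MetricSpace X] {n : ℕ} (x : Fin n → X) : ℝ :=
  ∑ i : Fin n, ∑ j ∈ Finset.Ioi i, dist (x i) (x j)

lemma no_n_periodic {X : Type*} [MetricSpace X] (n : ℕ) (hn : 2 ≤ n)
    (T : X → X)
    (hT : ∃ α : ℝ, 0 ≤ α ∧ α < 1 ∧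
      ∀ x : Fin n → X, Function.Injective x → totalS (T ∘ x) ≤ α * totalS x) :
    ¬∃ x : Fin n → X, Function.Injective x ∧
      ∀ i : Fin n, ∃ k : ℕ, 0 < k ∧ T^[k] (x i) = x i := by
  obtain ⟨α, hα0, hα1, hcontr⟩ := hT
  rintro ⟨x, hinj, hper⟩
  choose k hk hfix using hper
  set K : ℕ := ∏ i : Fin n, k i with hK
  have hKpos : 0 < K := Finset.prod_pos (fun i _ => hk i)
  have hfixK : ∀ i, T^[K] (x i) = x i := by
    intro i
    obtain ⟨m, hm⟩ : k i ∣ K := Finset.dvd_prod_of_mem k (Finset.mem_univ i)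
    rw [hm, Function.iterate_mul]
    exact Function.iterate_fixed (hfix i) m
  -- injectivity of T^[m] ∘ x
  have hinjm : ∀ m : ℕ, Function.Injective (T^[m] ∘ x) := by
    intro m a b hab
    simp only [Function.comp_apply] at hab
    apply hinj
    have key : ∀ i, T^[K * m - m] (T^[m] (x i)) = x i := by
      intro i
      rw [← Function.iterate_add_apply]
      have h1 : K * m - m + m = K * m := by
        have : m ≤ K * m := Nat.le_mul_of_pos_left m hKpos
        omega
      rw [h1, Function.iterate_mul]
      exact Function.iterate_fixed (hfixK i) m
    rw [← key a, ← key b, hab]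
  -- contraction iterated
  have hiter : ∀ m : ℕ, totalS (T^[m] ∘ x) ≤ α ^ m * totalS x := by
    intro m
    induction m with
    | zero => simp [Function.iterate_zero]
    | succ m ih =>
      have h1 : T^[m + 1] ∘ x = T ∘ (T^[m] ∘ x) := by
        rw [Function.iterate_succ']; rfl
      rw [h1]
      calc totalS (T ∘ (T^[m] ∘ x)) ≤ α * totalS (T^[m] ∘ x) := hcontr _ (hinjm m)
        _ ≤ α * (α ^ m * totalS x) := by
            apply mul_le_mul_of_nonneg_left ih hα0
        _ = α ^ (m + 1) * totalS x := by ring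
  have hfixKx : T^[K] ∘ x = x := funext fun i => hfixK i
  have hSpos : 0 < totalS x := by
    set i0 : Fin n := ⟨0, by omega⟩
    set i1 : Fin n := ⟨1, by omega⟩
    have h0 : i0 < i1 := by simp [i0, i1, Fin.lt_def]
    have hd : 0 < dist (x i0) (x i1) := by
      rw [dist_pos]
      exact fun h => absurd (hinj h) (by simp [i0, i1, Fin.ext_iff])
    apply Finset.sum_pos' (fun i _ => Finset.sum_nonneg fun j _ => dist_nonneg)
    refine ⟨i0, Finset.mem_univ _, ?_⟩
    apply Finset.sum_pos' (fun j _ => dist_nonneg)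
    exact ⟨i1, Finset.mem_Ioi.2 h0, hd⟩
  have h2 := hiter K
  rw [hfixKx] at h2
  have hαK : α ^ K < 1 := pow_lt_one₀ hα0 hα1 (by omega)
  nlinarith

theorem stmt_4 {X : Type*} [MetricSpace X] (n : ℕ) (hn : 2 ≤ n)
    (hcard : ∃ f : Fin n → X, Function.Injective f)
    (T : X → X)
    (hT : ∃ α : ℝ, 0 ≤ α ∧ α < 1 ∧
      ∀ x : Fin n → X, Function.Injective x → totalS (T ∘ x) ≤ α * totalS x) :
    ({x : X | ∃ k : ℕ, 0 < k ∧ T^[k] x = x}.Finite ∧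
      {x : X | ∃ k : ℕ, 0 < k ∧ T^[k] x = x}.ncard ≤ n - 1) ∧
    ¬∃ x : Fin n → X, Function.Injective x ∧
      ∀ i : Fin n, ∃ k : ℕ, 0 < k ∧ T^[k] (x i) = x i := by
  have main := no_n_periodic n hn T hT
  set P : Set X := {x : X | ∃ k : ℕ, 0 < k ∧ T^[k] x = x} with hP
  -- helper: from a finite subset of P with ncard n, derive a contradiction
  have hsub : ∀ t : Set X, t ⊆ P → t.Finite → t.ncard = n → False := by
    intro t htP htfin htcard
    have hcard' : htfin.toFinset.card = n := by
      rw [← Set.ncard_eq_toFinset_card t htfin]; exact htcard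
    have e := htfin.toFinset.equivFinOfCardEq hcard'
    apply main
    refine ⟨fun i => (e.symm i : X), ?_, ?_⟩
    · intro a b hab
      have := Subtype.ext hab
      exact e.symm.injective this
    · intro i
      have : ((e.symm i : X)) ∈ t := by
        have := (e.symm i).2
        rwa [Set.Finite.mem_toFinset] at this
      exact htP this
  have hfin : P.Finite := by
    by_contra hinf
    obtain ⟨t, hts, htfin, htcard⟩ := Set.Infinite.exists_subset_ncard_eq hinf n
    exact hsub t hts htfin htcard
  refine ⟨⟨hfin, ?_⟩, main⟩
  by_contra hlt
  have hge : n ≤ P.ncard := by omega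
  obtain ⟨t, hts, htcard⟩ := Set.exists_subset_card_eq hge
  exact hsub t hts (hfin.subset hts) htcard
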